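/- Let 0 < σ < 1 and μ₁ ≥ μ₂ ≥ 0. Then for every α ∈ [0,1], T(N(0,1), N(μ₁,σ²))(α) ≤ T(N(0,1), N(μ₂,σ²))(α): for a fixed variance σ² < 1, the trade-off function against N(μ,σ²) is pointwise non-increasing in the mean μ ≥ 0. -/

import Mathlib

open MeasureTheory ProbabilityTheory

open Real

/-- The trade-off function `T(P,Q)(a)`. -/
noncomputable def tradeOff {Ω : Type*} [MeasurableSpace Ω] (P Q : Measure Ω) (a : ℝ) : ℝ :=
  sInf { b : ℝ | ∃ φ : Ω → ℝ, Measurable φ ∧ (∀ x, φ x ∈ Set.Icc (0:ℝ) 1) ∧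
    (∫ x, φ x ∂P) ≤ a ∧ b = 1 - ∫ x, φ x ∂Q }

lemma integral_gaussianReal_eq (μ : ℝ) {v : NNReal} (hv : v ≠ 0) (φ : ℝ → ℝ) :
    ∫ x, φ x ∂(gaussianReal μ v) = ∫ x, φ x * gaussianPDFReal μ v x := by
  rw [gaussianReal_of_var_ne_zero _ hv]
  have : (gaussianPDF μ v) = fun x => ((gaussianPDFReal μ v x).toNNReal : ENNReal) := by
    ext x; rfl
  rw [this, integral_withDensity_eq_integral_smul
    ((measurable_gaussianPDFReal μ v).real_toNNReal)]
  congr 1; ext x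
  rw [NNReal.smul_def, smul_eq_mul, Real.coe_toNNReal _ (gaussianPDFReal_nonneg μ v x), mul_comm]

lemma integrable_mul_gaussianPDFReal (μ : ℝ) (v : NNReal) (φ : ℝ → ℝ)
    (hm : Measurable φ) (hb : ∀ x, φ x ∈ Set.Icc (0:ℝ) 1) :
    Integrable (fun x => φ x * gaussianPDFReal μ v x) :=
  (integrable_gaussianPDFReal μ v).bdd_mul (c := 1) hm.aestronglyMeasurable
    (Filter.Eventually.of_forall fun x => by rw [Real.norm_eq_abs, abs_le]; exact ⟨by linarith [(hb x).1], (hb x).2⟩)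

lemma integral_feasible_bounds (μ : ℝ) {v : NNReal} (hv : v ≠ 0) (φ : ℝ → ℝ)
    (hm : Measurable φ) (hb : ∀ x, φ x ∈ Set.Icc (0:ℝ) 1) :
    0 ≤ ∫ x, φ x ∂(gaussianReal μ v) ∧ ∫ x, φ x ∂(gaussianReal μ v) ≤ 1 := by
  rw [integral_gaussianReal_eq μ hv]
  constructor
  · exact integral_nonneg fun x => mul_nonneg (hb x).1 (gaussianPDFReal_nonneg μ v x)
  · calc ∫ x, φ x * gaussianPDFReal μ v x ≤ ∫ x, gaussianPDFReal μ v x := by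
          apply integral_mono (integrable_mul_gaussianPDFReal μ v φ hm hb)
            (integrable_gaussianPDFReal μ v)
          intro x
          simp only []
          nlinarith [(hb x).2, gaussianPDFReal_nonneg μ v x, (hb x).1]
    _ = 1 := integral_gaussianPDFReal_eq_one μ hv

lemma stdnorm_mono (u w : ℝ) (h : w^2 ≤ u^2) :
    gaussianPDFReal 0 1 u ≤ gaussianPDFReal 0 1 w := by
  rw [gaussianPDFReal, gaussianPDFReal]
  apply mul_le_mul_of_nonneg_left _ (by positivity)
  apply Real.exp_le_exp.2
  push_cast
  nlinarith

lemma continuous_stdnorm : Continuous (gaussianPDFReal 0 1) := by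
  unfold gaussianPDFReal
  fun_prop

lemma gauss_ratio (σ μ : ℝ) (hσ0 : 0 < σ) (hσ1 : σ < 1) (x : ℝ) :
    gaussianPDFReal μ ((σ^2).toNNReal) x =
      (σ⁻¹ * rexp (μ^2 / (2*(1-σ^2)))) *
        rexp (-((1-σ^2)/(2*σ^2)) * (x - μ/(1-σ^2))^2) * gaussianPDFReal 0 1 x := by
  have h1 : (1:ℝ) - σ^2 ≠ 0 := by nlinarith
  have hσ : σ ≠ 0 := hσ0.ne'
  rw [gaussianPDFReal, gaussianPDFReal, Real.coe_toNNReal _ (sq_nonneg σ)]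
  push_cast
  have hs : Real.sqrt (2 * π * σ^2) = Real.sqrt (2 * π) * σ := by
    rw [Real.sqrt_mul (by positivity), Real.sqrt_sq hσ0.le]
  rw [hs, mul_one (2*π)]
  have e3 : rexp (μ^2/(2*(1-σ^2))) * rexp (-((1-σ^2)/(2*σ^2)) * (x - μ/(1-σ^2))^2)
      * rexp (-(x-0)^2/2) = rexp (-(x-μ)^2/(2*σ^2)) := by
    rw [← Real.exp_add, ← Real.exp_add]
    congr 1
    field_simp
    ring
  rw [show (2:ℝ)*1 = 2 by norm_num, ← e3]
  ring

lemma np_lemma (σ μ r : ℝ) (hσ0 : 0 < σ) (hσ1 : σ < 1) (hr : 0 ≤ r)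
    (φ : ℝ → ℝ) (hm : Measurable φ) (hb : ∀ x, φ x ∈ Set.Icc (0:ℝ) 1)
    (hle : ∫ x, φ x * gaussianPDFReal 0 1 x ≤
      ∫ x in Set.Icc (μ/(1-σ^2) - r) (μ/(1-σ^2) + r), gaussianPDFReal 0 1 x) :
    ∫ x, φ x * gaussianPDFReal μ ((σ^2).toNNReal) x ≤
      ∫ x in Set.Icc (μ/(1-σ^2) - r) (μ/(1-σ^2) + r), gaussianPDFReal μ ((σ^2).toNNReal) x := by
  set m := μ/(1-σ^2) with hm_def
  set p := gaussianPDFReal 0 1 with hp_def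
  set q := gaussianPDFReal μ ((σ^2).toNNReal) with hq_def
  set A := Set.Icc (m - r) (m + r) with hA_def
  have hA : MeasurableSet A := measurableSet_Icc
  set D : ℝ := σ⁻¹ * rexp (μ^2 / (2*(1-σ^2))) with hD_def
  set a : ℝ := (1-σ^2)/(2*σ^2) with ha_def
  have hD : 0 < D := by positivity
  have ha : 0 ≤ a := by
    apply div_nonneg (by nlinarith) (by positivity)
  set k : ℝ := D * rexp (-a * r^2) with hk_def
  have hk : 0 ≤ k := by positivity
  have hratio : ∀ x, q x = D * rexp (-a * (x - m)^2) * p x :=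
    fun x => gauss_ratio σ μ hσ0 hσ1 x
  have hppos : ∀ x, 0 < p x := fun x => gaussianPDFReal_pos 0 1 x one_ne_zero
  have sign_in : ∀ x ∈ A, k * p x ≤ q x := by
    intro x hx
    rw [hratio x, hk_def]
    have hsq : (x - m)^2 ≤ r^2 := sq_le_sq' (by linarith [hx.1]) (by linarith [hx.2])
    have h2 : rexp (-a * r^2) ≤ rexp (-a * (x - m)^2) := by
      apply Real.exp_le_exp.2; nlinarith
    have := mul_le_mul_of_nonneg_right (mul_le_mul_of_nonneg_left h2 hD.le) (hppos x).le
    linarith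
  have sign_out : ∀ x ∉ A, q x ≤ k * p x := by
    intro x hx
    rw [hratio x, hk_def]
    have hsq : r^2 ≤ (x - m)^2 := by
      rw [hA_def, Set.mem_Icc, not_and_or] at hx
      rcases hx with hx | hx <;> push_neg at hx <;> nlinarith
    have h2 : rexp (-a * (x - m)^2) ≤ rexp (-a * r^2) := by
      apply Real.exp_le_exp.2; nlinarith
    have := mul_le_mul_of_nonneg_right (mul_le_mul_of_nonneg_left h2 hD.le) (hppos x).le
    linarith
  have ip : Integrable p := integrable_gaussianPDFReal 0 1
  have iq : Integrable q := integrable_gaussianPDFReal μ ((σ^2).toNNReal)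
  have iφp : Integrable (fun x => φ x * p x) :=
    ip.bdd_mul (c := 1) hm.aestronglyMeasurable (Filter.Eventually.of_forall fun x => by
      rw [Real.norm_eq_abs, abs_le]; exact ⟨by linarith [(hb x).1], (hb x).2⟩)
  have iφq : Integrable (fun x => φ x * q x) :=
    iq.bdd_mul (c := 1) hm.aestronglyMeasurable (Filter.Eventually.of_forall fun x => by
      rw [Real.norm_eq_abs, abs_le]; exact ⟨by linarith [(hb x).1], (hb x).2⟩)
  have iIp : Integrable (A.indicator p) := ip.indicator hA
  have iIq : Integrable (A.indicator q) := iq.indicator hA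
  set h : ℝ → ℝ := fun x =>
    A.indicator q x - k * A.indicator p x - φ x * q x + k * (φ x * p x) with hh_def
  have hnn : ∀ x, 0 ≤ h x := by
    intro x
    by_cases hx : x ∈ A
    · simp only [hh_def, Set.indicator_of_mem hx]
      nlinarith [mul_nonneg (sub_nonneg.2 (hb x).2) (sub_nonneg.2 (sign_in x hx))]
    · simp only [hh_def, Set.indicator_of_notMem hx]
      nlinarith [mul_nonneg (hb x).1 (sub_nonneg.2 (sign_out x hx))]
  have key : 0 ≤ ∫ x, h x := integral_nonneg hnn
  have expand : ∫ x, h x = (∫ x, A.indicator q x) - k * (∫ x, A.indicator p x)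
      - (∫ x, φ x * q x) + k * (∫ x, φ x * p x) := by
    have iIq' : Integrable (fun x => A.indicator q x) := iIq
    have iIp' : Integrable (fun x => k * A.indicator p x) :=
      (ip.indicator hA).const_mul k
    have iA : Integrable (fun x => A.indicator q x - k * A.indicator p x) := iIq'.sub iIp'
    have i1 : Integrable (fun x => A.indicator q x - k * A.indicator p x - φ x * q x) :=
      iA.sub iφq
    have i2 : Integrable (fun x => k * (φ x * p x)) := iφp.const_mul k
    rw [hh_def]
    rw [integral_add i1 i2, integral_sub iA iφq, integral_sub iIq' iIp',
      integral_const_mul, integral_const_mul]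
  rw [integral_indicator hA, integral_indicator hA] at expand
  have hφp : ∫ x, φ x * p x ≤ ∫ x in A, p x := hle
  nlinarith [mul_le_mul_of_nonneg_left hφp hk, key, expand]

/-- for fixed variance `σ² < 1`, the trade-off function against
`N(μ,σ²)` is pointwise non-increasing in the mean `μ ≥ 0`. -/
theorem stmt_2 (σ μ₁ μ₂ : ℝ) (hσ0 : 0 < σ) (hσ1 : σ < 1)
    (hμ : μ₁ ≥ μ₂) (hμ₂ : μ₂ ≥ 0) (α : ℝ) (hα : α ∈ Set.Icc (0:ℝ) 1) :
    tradeOff (gaussianReal 0 1) (gaussianReal μ₁ (σ ^ 2).toNNReal) α ≤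
      tradeOff (gaussianReal 0 1) (gaussianReal μ₂ (σ ^ 2).toNNReal) α := by
  obtain ⟨hα0, hα1⟩ := hα
  have hv : ((σ ^ 2).toNNReal : NNReal) ≠ 0 := by
    rw [Ne, Real.toNNReal_eq_zero]; push_neg; positivity
  have h1v : (1 : NNReal) ≠ 0 := one_ne_zero
  have h1σ : (0:ℝ) < 1 - σ^2 := by nlinarith
  -- the two trade-off sets
  set S₁ := { b : ℝ | ∃ φ : ℝ → ℝ, Measurable φ ∧ (∀ x, φ x ∈ Set.Icc (0:ℝ) 1) ∧
    (∫ x, φ x ∂(gaussianReal 0 1)) ≤ α ∧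
    b = 1 - ∫ x, φ x ∂(gaussianReal μ₁ (σ ^ 2).toNNReal) } with hS₁
  set S₂ := { b : ℝ | ∃ φ : ℝ → ℝ, Measurable φ ∧ (∀ x, φ x ∈ Set.Icc (0:ℝ) 1) ∧
    (∫ x, φ x ∂(gaussianReal 0 1)) ≤ α ∧
    b = 1 - ∫ x, φ x ∂(gaussianReal μ₂ (σ ^ 2).toNNReal) } with hS₂
  have hT₁ : tradeOff (gaussianReal 0 1) (gaussianReal μ₁ (σ ^ 2).toNNReal) α = sInf S₁ := rfl
  have hT₂ : tradeOff (gaussianReal 0 1) (gaussianReal μ₂ (σ ^ 2).toNNReal) α = sInf S₂ := rfl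
  have hlb₁ : ∀ b ∈ S₁, (0:ℝ) ≤ b := by
    rintro b ⟨φ, hφm, hφb, -, rfl⟩
    linarith [(integral_feasible_bounds μ₁ hv φ hφm hφb).2]
  have hlb₂ : ∀ b ∈ S₂, (0:ℝ) ≤ b := by
    rintro b ⟨φ, hφm, hφb, -, rfl⟩
    linarith [(integral_feasible_bounds μ₂ hv φ hφm hφb).2]
  have hconstmem : ∀ (μ' : ℝ), (1 - α * 1) ∈ { b : ℝ | ∃ φ : ℝ → ℝ, Measurable φ ∧
      (∀ x, φ x ∈ Set.Icc (0:ℝ) 1) ∧ (∫ x, φ x ∂(gaussianReal 0 1)) ≤ α ∧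
      b = 1 - ∫ x, φ x ∂(gaussianReal μ' (σ ^ 2).toNNReal) } := by
    intro μ'
    refine ⟨fun _ => α, measurable_const, fun x => ⟨hα0, hα1⟩, ?_, ?_⟩
    · rw [integral_const]; simp [measure_univ]
    · rw [integral_const]; simp [measure_univ]
  have hne₂ : S₂.Nonempty := ⟨_, hconstmem μ₂⟩
  rw [hT₁, hT₂]
  by_cases hα1' : α = 1
  · -- α = 1 : LHS ≤ 0 ≤ RHS
    have hmem : (0:ℝ) ∈ S₁ := by
      refine ⟨fun _ => 1, measurable_const, fun x => ⟨zero_le_one, le_refl 1⟩, ?_, ?_⟩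
      · rw [integral_const]; simp [measure_univ, hα1'.ge]
      · rw [integral_const]; simp [measure_univ]
    have h1 : sInf S₁ ≤ 0 := csInf_le ⟨0, hlb₁⟩ hmem
    have h2 : 0 ≤ sInf S₂ := le_csInf hne₂ hlb₂
    linarith
  have hα1 : α < 1 := lt_of_le_of_ne hα1 hα1'
  set p := gaussianPDFReal 0 1 with hp_def
  set q₁ := gaussianPDFReal μ₁ ((σ^2).toNNReal) with hq₁_def
  set q₂ := gaussianPDFReal μ₂ ((σ^2).toNNReal) with hq₂_def
  set m := μ₂ / (1 - σ^2) with hm_def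
  have hm0 : 0 ≤ m := div_nonneg hμ₂ h1σ.le
  have hpint : ∀ a b : ℝ, IntervalIntegrable p volume a b :=
    fun a b => continuous_stdnorm.intervalIntegrable a b
  -- the CDF-type function
  set F : ℝ → ℝ := fun r => ∫ x in (m - r)..(m + r), p x with hF_def
  have hFeq : ∀ r, F r = (∫ x in (0:ℝ)..(m + r), p x) - ∫ x in (0:ℝ)..(m - r), p x := by
    intro r
    rw [intervalIntegral.integral_interval_sub_left (hpint 0 (m+r)) (hpint 0 (m-r))]
  have hFcont : Continuous F := by
    have h1 : Continuous fun r : ℝ => ∫ x in (0:ℝ)..(m + r), p x :=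
      (intervalIntegral.continuous_primitive hpint 0).comp (continuous_const.add continuous_id)
    have h2 : Continuous fun r : ℝ => ∫ x in (0:ℝ)..(m - r), p x :=
      (intervalIntegral.continuous_primitive hpint 0).comp (continuous_const.sub continuous_id)
    have : F = fun r => (∫ x in (0:ℝ)..(m + r), p x) - ∫ x in (0:ℝ)..(m - r), p x :=
      funext hFeq
    rw [this]; exact h1.sub h2
  have hF0 : F 0 = 0 := by
    simp only [hF_def, sub_zero, add_zero, intervalIntegral.integral_same]
  have hFlim : Filter.Tendsto F Filter.atTop (nhds 1) := by
    have h1 : Filter.Tendsto (fun r : ℝ => m - r) Filter.atTop Filter.atBot := by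
      apply Filter.tendsto_atBot_add_const_left
      exact Filter.tendsto_neg_atTop_atBot.congr (fun r => by ring)
    have h2 : Filter.Tendsto (fun r : ℝ => m + r) Filter.atTop Filter.atTop :=
      Filter.tendsto_atTop_add_const_left _ m Filter.tendsto_id
    have := MeasureTheory.intervalIntegral_tendsto_integral
      (integrable_gaussianPDFReal 0 1) h1 h2
    rwa [integral_gaussianPDFReal_eq_one 0 h1v] at this
  obtain ⟨R, hαR, hR0⟩ :=
    ((hFlim.eventually (eventually_ge_nhds hα1)).and (Filter.eventually_ge_atTop 0)).exists
  obtain ⟨r, hrIcc, hrF⟩ := intermediate_value_Icc hR0 hFcont.continuousOn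
    (Set.mem_Icc.2 ⟨by rw [hF0]; exact hα0, hαR⟩)
  have hr0 : 0 ≤ r := hrIcc.1
  set a := m - r with ha_def
  set b := m + r with hb_def
  have hab : a ≤ b := by simp only [ha_def, hb_def]; linarith
  set δ := μ₁ - μ₂ with hδ_def
  have hδ0 : 0 ≤ δ := by simp only [hδ_def]; linarith
  -- the P-measure of the base interval is α
  have hIαP : ∫ x in Set.Icc a b, p x = α := by
    rw [integral_Icc_eq_integral_Ioc, ← intervalIntegral.integral_of_le hab]
    exact hrF
  -- the shifted interval has P-measure ≤ α
  have hshift_p : ∫ x in Set.Icc (a + δ) (b + δ), p x ≤ α := by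
    rw [integral_Icc_eq_integral_Ioc, ← intervalIntegral.integral_of_le (by linarith)]
    have chasles1 : (∫ x in a..b, p x) + ∫ x in b..(b + δ), p x = ∫ x in a..(b + δ), p x :=
      intervalIntegral.integral_add_adjacent_intervals (hpint a b) (hpint b (b + δ))
    have chasles2 : (∫ x in a..(a + δ), p x) + ∫ x in (a + δ)..(b + δ), p x
        = ∫ x in a..(b + δ), p x :=
      intervalIntegral.integral_add_adjacent_intervals (hpint a (a + δ)) (hpint (a + δ) (b + δ))
    have comp : ∫ x in a..(a + δ), p (x + (b - a)) = ∫ x in b..(b + δ), p x := by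
      rw [intervalIntegral.integral_comp_add_right]
      congr 1 <;> ring
    have mono : ∫ x in a..(a + δ), p (x + (b - a)) ≤ ∫ x in a..(a + δ), p x := by
      apply intervalIntegral.integral_mono_on (by linarith)
      · exact (continuous_stdnorm.comp (continuous_id.add continuous_const)).intervalIntegrable _ _
      · exact hpint a (a + δ)
      · intro x hx
        apply stdnorm_mono
        have hax : a ≤ x := hx.1
        have hba : 0 ≤ b - a := by linarith
        nlinarith [hm0, hr0]
    have hab2 : ∫ x in a..b, p x = α := by
      rw [intervalIntegral.integral_of_le hab, ← integral_Icc_eq_integral_Ioc]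
      exact hIαP
    linarith
  -- translation identity for q-integrals
  have htrans : ∫ x in Set.Icc (a + δ) (b + δ), q₁ x = ∫ x in Set.Icc a b, q₂ x := by
    rw [integral_Icc_eq_integral_Ioc, integral_Icc_eq_integral_Ioc,
      ← intervalIntegral.integral_of_le (by linarith), ← intervalIntegral.integral_of_le hab,
      ← intervalIntegral.integral_comp_add_right (fun x => q₁ x) δ]
    apply intervalIntegral.integral_congr
    intro x _
    simp only [hq₁_def, hq₂_def, gaussianPDFReal, hδ_def]
    congr 2
    ring
  -- the indicator test for Q₁
  set I : Set ℝ := Set.Icc (a + δ) (b + δ) with hI_def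
  have hImeas : MeasurableSet I := measurableSet_Icc
  set φ₁ : ℝ → ℝ := I.indicator (fun _ => 1) with hφ₁_def
  have hφ₁m : Measurable φ₁ := measurable_const.indicator hImeas
  have hφ₁b : ∀ x, φ₁ x ∈ Set.Icc (0:ℝ) 1 := by
    intro x
    by_cases hx : x ∈ I <;> simp [hφ₁_def, hx]
  have hind : ∀ (f : ℝ → ℝ), (fun x => φ₁ x * f x) = I.indicator f := by
    intro f
    ext x
    by_cases hx : x ∈ I <;> simp [hφ₁_def, hx]
  have hφ₁P : ∫ x, φ₁ x ∂(gaussianReal 0 1) ≤ α := by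
    rw [integral_gaussianReal_eq 0 h1v, hind p, integral_indicator hImeas]
    exact hshift_p
  have hφ₁Q : ∫ x, φ₁ x ∂(gaussianReal μ₁ (σ^2).toNNReal) = ∫ x in Set.Icc a b, q₂ x := by
    rw [integral_gaussianReal_eq μ₁ hv, hind q₁, integral_indicator hImeas]
    exact htrans
  have hmem₁ : (1 - ∫ x in Set.Icc a b, q₂ x) ∈ S₁ := by
    exact ⟨φ₁, hφ₁m, hφ₁b, hφ₁P, by rw [hφ₁Q]⟩
  have hL : sInf S₁ ≤ 1 - ∫ x in Set.Icc a b, q₂ x := csInf_le ⟨0, hlb₁⟩ hmem₁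
  -- lower bound on sInf S₂ via Neyman–Pearson
  have hR : 1 - ∫ x in Set.Icc a b, q₂ x ≤ sInf S₂ := by
    apply le_csInf hne₂
    rintro b' ⟨φ, hφm, hφb, hφP, rfl⟩
    have hnp := np_lemma σ μ₂ r hσ0 hσ1 hr0 φ hφm hφb
      (by rw [← integral_gaussianReal_eq 0 h1v]
          calc ∫ x, φ x ∂(gaussianReal 0 1) ≤ α := hφP
          _ = ∫ x in Set.Icc (μ₂/(1-σ^2) - r) (μ₂/(1-σ^2) + r), gaussianPDFReal 0 1 x := hIαP.symm)
    rw [integral_gaussianReal_eq μ₂ hv]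
    have : ∫ x, φ x * q₂ x ≤ ∫ x in Set.Icc a b, q₂ x := hnp
    linarith
  linarith
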